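/- Counting interval summands by the persistence measure: suppose a persistence module V over ℝ is isomorphic to a direct sum ⊕_{ℓ∈L} I^{J_ℓ} of interval modules. Then for all extended reals −∞ ≤ a < b ≤ c < d ≤ +∞ with b and c finite, μ_V([a,b]×[c,d]) equals the cardinality (in {0,1,2,…} ∪ {∞}) of the set {ℓ ∈ L : [b,c] ⊆ J_ℓ ⊆ (a,d)} (here (a,d) denotes (−∞,d) when a = −∞ and (a,+∞) when d = +∞). -/

import Mathlib

attribute [local instance] Classical.propDecidable

structure PersMod (k : Type) [Field k] (T : Type) [Preorder T] where
  space : T → Type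
  [addCommGroup : ∀ t, AddCommGroup (space t)]
  [module : ∀ t, Module k (space t)]
  map : ∀ s t : T, s ≤ t → space s →ₗ[k] space t
  map_id : ∀ t, map t t le_rfl = LinearMap.id
  map_comp : ∀ r s t (h1 : r ≤ s) (h2 : s ≤ t),
    (map s t h2).comp (map r s h1) = map r t (h1.trans h2)

attribute [instance] PersMod.addCommGroup PersMod.module

def PersIso {k : Type} [Field k] {T : Type} [Preorder T] (U V : PersMod k T) : Prop :=
  ∃ e : ∀ t, U.space t ≃ₗ[k] V.space t,
    ∀ s t (h : s ≤ t),
      (e t).toLinearMap.comp (U.map s t h) = (V.map s t h).comp (e s).toLinearMap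

def IsIntervalSet {T : Type} [Preorder T] (J : Set T) : Prop :=
  J.Nonempty ∧ ∀ ⦃r s t : T⦄, r ∈ J → t ∈ J → r ≤ s → s ≤ t → s ∈ J

noncomputable def intervalModule (k : Type) [Field k] (T : Type) [Preorder T]
    (J : Set T) (hJ : IsIntervalSet J) : PersMod k T where
  space t := PLift (t ∈ J) → k
  addCommGroup := fun _ => inferInstance
  module := fun _ => inferInstance
  map s t _ :=
    { toFun := fun f _ => if hs : s ∈ J then f ⟨hs⟩ else 0
      map_add' := fun f g => by
        funext ht; by_cases hs : s ∈ J <;> simp [hs]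
      map_smul' := fun c f => by
        funext ht; by_cases hs : s ∈ J <;> simp [hs] }
  map_id t := by
    refine LinearMap.ext fun f => funext fun ht => ?_
    show (if hs : t ∈ J then f ⟨hs⟩ else 0) = f ht
    rw [dif_pos ht.down]
  map_comp r s t h1 h2 := by
    refine LinearMap.ext fun f => funext fun ht => ?_
    show (if hs : s ∈ J then (if hr : r ∈ J then f ⟨hr⟩ else 0) else 0)
        = (if hr : r ∈ J then f ⟨hr⟩ else 0)
    by_cases hr : r ∈ J
    · have hs : s ∈ J := hJ.2 hr ht.down h1 h2
      simp [hr, hs]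
    · by_cases hs : s ∈ J <;> simp [hr, hs]

noncomputable def dsum {k : Type} [Field k] {T : Type} [Preorder T] {L : Type}
    (V : L → PersMod k T) : PersMod k T where
  space t := DFinsupp (fun ℓ => (V ℓ).space t)
  addCommGroup := fun _ => inferInstance
  module := fun _ => inferInstance
  map s t h := DFinsupp.mapRange.linearMap (fun ℓ => (V ℓ).map s t h)
  map_id t := by
    show DFinsupp.mapRange.linearMap (fun ℓ => (V ℓ).map t t le_rfl) = LinearMap.id
    have : (fun ℓ => (V ℓ).map t t le_rfl)
        = fun ℓ => (LinearMap.id : (V ℓ).space t →ₗ[k] (V ℓ).space t) :=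
      funext fun ℓ => (V ℓ).map_id t
    rw [this]
    exact DFinsupp.mapRange.linearMap_id
  map_comp r s t h1 h2 := by
    show (DFinsupp.mapRange.linearMap (fun ℓ => (V ℓ).map s t h2)).comp
        (DFinsupp.mapRange.linearMap (fun ℓ => (V ℓ).map r s h1))
      = DFinsupp.mapRange.linearMap (fun ℓ => (V ℓ).map r t (h1.trans h2))
    rw [← DFinsupp.mapRange.linearMap_comp]
    congr 1
    funext ℓ
    exact (V ℓ).map_comp r s t h1 h2

open scoped ENNReal

section Dim

noncomputable def edim (k : Type) [Field k] (M : Type) [AddCommGroup M] [Module k M] : ℕ∞ :=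
  Cardinal.toENat (Module.rank k M)

noncomputable def erank {k : Type} [Field k] {M N : Type} [AddCommGroup M] [Module k M]
    [AddCommGroup N] [Module k N] (f : M →ₗ[k] N) : ℕ∞ :=
  edim k (LinearMap.range f)

noncomputable def ecard (S : Type) : ℕ∞ := Cardinal.toENat (Cardinal.mk S)

end Dim

section Matchings

noncomputable def eDiff (x y : EReal) : ℝ≥0∞ :=
  if x = y then 0
  else if x = ⊤ ∨ x = ⊥ ∨ y = ⊤ ∨ y = ⊥ then ⊤
  else ENNReal.ofReal |x.toReal - y.toReal|

noncomputable def dPt (α β : EReal × EReal) : ℝ≥0∞ :=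
  max (eDiff α.1 β.1) (eDiff α.2 β.2)

noncomputable def diagDist (α : EReal × EReal) : ℝ≥0∞ :=
  if α.1 = ⊥ ∨ α.2 = ⊤ then ⊤ else ENNReal.ofReal ((α.2.toReal - α.1.toReal) / 2)

def IsMatching {α β : Type} (M : Set (α × β)) : Prop :=
  (∀ a b b', (a, b) ∈ M → (a, b') ∈ M → b = b') ∧
  (∀ a a' b, (a, b) ∈ M → (a', b) ∈ M → a = a')

def IsDeltaMatching {α β : Type} (A : α → EReal × EReal) (B : β → EReal × EReal)
    (δ : ℝ≥0∞) : Prop :=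
  ∃ M : Set (α × β), IsMatching M ∧
    (∀ p ∈ M, dPt (A p.1) (B p.2) ≤ δ) ∧
    (∀ a, (∀ b, (a, b) ∉ M) → diagDist (A a) ≤ δ) ∧
    (∀ b, (∀ a, (a, b) ∉ M) → diagDist (B b) ≤ δ)

noncomputable def dBottle {α β : Type} (A : α → EReal × EReal) (B : β → EReal × EReal) : ℝ≥0∞ :=
  sInf {d : ℝ≥0∞ | ∃ δ : ℝ, 0 ≤ δ ∧ IsDeltaMatching A B (ENNReal.ofReal δ) ∧ d = ENNReal.ofReal δ}

end Matchings

section Measure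

noncomputable def persIm {k : Type} [Field k] (V : PersMod k ℝ) (a : EReal) (c : ℝ) :
    Submodule k (V.space c) :=
  if h : ∃ a' : ℝ, a = (a' : EReal) ∧ a' ≤ c then
    LinearMap.range (V.map h.choose c h.choose_spec.2)
  else ⊥

noncomputable def persKer {k : Type} [Field k] (V : PersMod k ℝ) (c : ℝ) (d : EReal) :
    Submodule k (V.space c) :=
  if h : ∃ d' : ℝ, d = (d' : EReal) ∧ c ≤ d' then
    LinearMap.ker (V.map c h.choose h.choose_spec.2)
  else ⊤

noncomputable def persMeasure {k : Type} [Field k] (V : PersMod k ℝ)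
    (a : EReal) (b c : ℝ) (d : EReal) : ℕ∞ :=
  edim k
    (↥(persIm V (b : EReal) c ⊓ persKer V c d) ⧸
      Submodule.comap (persIm V (b : EReal) c ⊓ persKer V c d).subtype
        (persIm V a c ⊓ persKer V c d))

end Measure

section Interleaving

def Interleaved (k : Type) [Field k] (U V : PersMod k ℝ) (δ : ℝ) : Prop :=
  ∃ (φ : ∀ t : ℝ, U.space t →ₗ[k] V.space (t + δ))
    (ψ : ∀ t : ℝ, V.space t →ₗ[k] U.space (t + δ)),
    (∀ s t (h : s ≤ t),
      (φ t).comp (U.map s t h) = (V.map (s + δ) (t + δ) (by linarith)).comp (φ s)) ∧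
    (∀ s t (h : s ≤ t),
      (ψ t).comp (V.map s t h) = (U.map (s + δ) (t + δ) (by linarith)).comp (ψ s)) ∧
    (∀ t (h : t ≤ t + δ + δ), (ψ (t + δ)).comp (φ t) = U.map t (t + δ + δ) h) ∧
    (∀ t (h : t ≤ t + δ + δ), (φ (t + δ)).comp (ψ t) = V.map t (t + δ + δ) h)

noncomputable def dInter (k : Type) [Field k] (U V : PersMod k ℝ) : ℝ≥0∞ :=
  sInf {d : ℝ≥0∞ | ∃ δ : ℝ, 0 ≤ δ ∧ Interleaved k U V δ ∧ d = ENNReal.ofReal δ}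

def QTame (k : Type) [Field k] (V : PersMod k ℝ) : Prop :=
  ∀ s t : ℝ, ∀ h : s < t, erank (V.map s t h.le) ≠ ⊤

def LocFinitePM (k : Type) [Field k] (W : PersMod k ℝ) : Prop :=
  ∃ (L : Type) (J : L → Set ℝ) (hJ : ∀ ℓ, IsIntervalSet (J ℓ)),
    PersIso W (dsum fun ℓ => intervalModule k ℝ (J ℓ) (hJ ℓ)) ∧
    ∀ S : Set ℝ, Bornology.IsBounded S → {ℓ : L | (J ℓ ∩ S).Nonempty}.Finite

noncomputable def zeroPers (k : Type) [Field k] : PersMod k ℝ where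
  space _ := PUnit
  addCommGroup := fun _ => inferInstance
  module := fun _ => inferInstance
  map _ _ _ := 0
  map_id t := LinearMap.ext fun x => Subsingleton.elim _ _
  map_comp r s t h1 h2 := LinearMap.ext fun x => Subsingleton.elim _ _

noncomputable def smoothing {k : Type} [Field k] (V : PersMod k ℝ) (ε : ℝ) (hε : 0 < ε) :
    PersMod k ℝ where
  space t := LinearMap.range (V.map (t - ε) (t + ε) (by linarith))
  addCommGroup := fun _ => inferInstance
  module := fun _ => inferInstance
  map s t h := LinearMap.restrict (V.map (s + ε) (t + ε) (by linarith))
    (p := LinearMap.range (V.map (s - ε) (s + ε) (by linarith)))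
    (q := LinearMap.range (V.map (t - ε) (t + ε) (by linarith)))
    (by
      rintro x ⟨y, rfl⟩
      refine ⟨V.map (s - ε) (t - ε) (by linarith) y, ?_⟩
      have h1 := LinearMap.congr_fun
        (V.map_comp (s - ε) (t - ε) (t + ε) (by linarith) (by linarith)) y
      have h2 := LinearMap.congr_fun
        (V.map_comp (s - ε) (s + ε) (t + ε) (by linarith) (by linarith)) y
      simp only [LinearMap.comp_apply] at h1 h2
      rw [h1, h2])
  map_id t := by
    refine LinearMap.ext fun x => Subtype.ext ?_
    have := LinearMap.congr_fun (V.map_id (t + ε)) x.1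
    simpa [LinearMap.restrict_apply] using this
  map_comp r s t h1 h2 := by
    refine LinearMap.ext fun x => Subtype.ext ?_
    have := LinearMap.congr_fun
      (V.map_comp (r + ε) (s + ε) (t + ε) (by linarith) (by linarith)) x.1
    simpa [LinearMap.restrict_apply] using this

end Interleaving

section Webb

def webbSubmodule (k : Type) [Field k] (t : ℤ) : Submodule k (ℕ → k) where
  carrier := {x | ∀ i : ℕ, (i : ℤ) < -t → x i = 0}
  add_mem' := by
    intro x y hx hy i hi
    simp [Pi.add_apply, hx i hi, hy i hi]
  zero_mem' := by
    intro i hi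
    rfl
  smul_mem' := by
    intro c x hx i hi
    simp [Pi.smul_apply, hx i hi]

noncomputable def webbModule (k : Type) [Field k] : PersMod k ↥{n : ℤ | n ≤ 0} where
  space t := ↥(webbSubmodule k t.1)
  addCommGroup := fun _ => inferInstance
  module := fun _ => inferInstance
  map s t h := Submodule.inclusion (by
    intro x hx
    have hx' : ∀ i : ℕ, (i : ℤ) < -s.1 → x i = 0 := hx
    intro i hi
    exact hx' i (lt_of_lt_of_le hi (neg_le_neg h)))
  map_id t := LinearMap.ext fun x => rfl
  map_comp r s t h1 h2 := LinearMap.ext fun x => rfl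

end Webb

section Decorated

/-- `decMem t x` : the real number `t` belongs to the interval described by the
decorated pair `x = ((p, εp), (q, εq))`, where the decoration `false` means `⁻`
and `true` means `⁺`. -/
def decMem (t : ℝ) (x : (EReal × Bool) × (EReal × Bool)) : Prop :=
  (x.1.1 < (t : EReal) ∨ (x.1.1 = (t : EReal) ∧ x.1.2 = false)) ∧
  ((t : EReal) < x.2.1 ∨ ((t : EReal) = x.2.1 ∧ x.2.2 = true))

/-- A valid decorated pair: the left coordinate is `p⁻`/`p⁺` for a real `p` or `−∞⁺`,
the right coordinate is `q⁻`/`q⁺` for a real `q` or `+∞⁻`, and the corresponding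
interval is nonempty (i.e. `p* < q*`). -/
def ValidDec (x : (EReal × Bool) × (EReal × Bool)) : Prop :=
  (x.1.1 = ⊥ → x.1.2 = true) ∧ x.1.1 ≠ ⊤ ∧ (x.2.1 = ⊤ → x.2.2 = false) ∧ x.2.1 ≠ ⊥ ∧
  {t : ℝ | decMem t x}.Nonempty

/-- The decorated pair `x` belongs to the rectangle `[a,b] × [c,d]`, i.e.
`[b,c] ⊆ ⟨p*,q*⟩ ⊆ (a,d)`. -/
def decInRect (x : (EReal × Bool) × (EReal × Bool)) (a : EReal) (b c : ℝ) (d : EReal) : Prop :=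
  (∀ t ∈ Set.Icc b c, decMem t x) ∧
  (∀ t : ℝ, decMem t x → a < (t : EReal) ∧ (t : EReal) < d)

/-- `Dgm` is (a labelling of) the decorated persistence diagram of `V`. -/
def IsDgmOf {k : Type} [Field k] (V : PersMod k ℝ) {ι : Type}
    (Dgm : ι → (EReal × Bool) × (EReal × Bool)) : Prop :=
  (∀ i, ValidDec (Dgm i)) ∧
  ∀ (a : EReal) (b c : ℝ) (d : EReal), a < (b : EReal) → b ≤ c → (c : EReal) < d →
    persMeasure V a b c d = ecard {i : ι // decInRect (Dgm i) a b c d}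

end Decorated

section RMeasure

/-- `[a,b] × [c,d]` is a (nondegenerate) rectangle contained in `D`. -/
def RectIn (D : Set (ℝ × ℝ)) (a b c d : ℝ) : Prop :=
  a < b ∧ c < d ∧ Set.Icc a b ×ˢ Set.Icc c d ⊆ D

/-- An r-measure on `D`: additivity under horizontal and vertical splitting. -/
def IsRMeasure (D : Set (ℝ × ℝ)) (μ : ℝ → ℝ → ℝ → ℝ → ℕ∞) : Prop :=
  (∀ a p b c d, a < p → p < b → RectIn D a b c d → μ a b c d = μ a p c d + μ p b c d) ∧
  (∀ a b c q d, c < q → q < d → RectIn D a b c d → μ a b c d = μ a b c q + μ a b q d)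

/-- Membership of a decorated point of the plane (`Bool` decoration: `true` = `⁺`,
`false` = `⁻`) in the closed rectangle `[a,b] × [c,d]`. -/
def dptMem (x : (ℝ × Bool) × (ℝ × Bool)) (a b c d : ℝ) : Prop :=
  a ≤ x.1.1 ∧ x.1.1 ≤ b ∧ c ≤ x.2.1 ∧ x.2.1 ≤ d ∧
  (x.1.1 = a → x.1.2 = true) ∧ (x.1.1 = b → x.1.2 = false) ∧
  (x.2.1 = c → x.2.2 = true) ∧ (x.2.1 = d → x.2.2 = false)

/-- The r-interior `D•` of `D`: decorated points contained in some rectangle of `D`. -/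
def rInt (D : Set (ℝ × ℝ)) : Set ((ℝ × Bool) × (ℝ × Bool)) :=
  {x | ∃ a b c d, RectIn D a b c d ∧ dptMem x a b c d}

/-- The number of decorated points, counted with multiplicity `m`, lying in the
rectangle `[a,b] × [c,d]`. -/
noncomputable def dcount (m : (ℝ × Bool) × (ℝ × Bool) → ℕ) (a b c d : ℝ) : ℕ∞ :=
  ecard (Σ x : {x : (ℝ × Bool) × (ℝ × Bool) // dptMem x a b c d}, Fin (m x.1))

end RMeasure

-- ===== new material =====
section Lemmas
variable {k : Type} [Field k]

lemma range_map_congr (V : PersMod k ℝ) {x b c : ℝ} (hxb : x = b) (hx : x ≤ c) (h : b ≤ c) :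
    LinearMap.range (V.map x c hx) = LinearMap.range (V.map b c h) := by subst hxb; rfl

lemma ker_map_congr (V : PersMod k ℝ) {c x d : ℝ} (hxd : x = d) (hx : c ≤ x) (h : c ≤ d) :
    LinearMap.ker (V.map c x hx) = LinearMap.ker (V.map c d h) := by subst hxd; rfl

lemma persIm_coe (V : PersMod k ℝ) {b c : ℝ} (h : b ≤ c) :
    persIm V (b : EReal) c = LinearMap.range (V.map b c h) := by
  have hex : ∃ a' : ℝ, (b : EReal) = (a' : EReal) ∧ a' ≤ c := ⟨b, rfl, h⟩
  rw [persIm, dif_pos hex]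
  exact range_map_congr V (EReal.coe_eq_coe_iff.mp hex.choose_spec.1.symm)
    hex.choose_spec.2 h

lemma persIm_bot (V : PersMod k ℝ) (c : ℝ) : persIm V ⊥ c = ⊥ := by
  rw [persIm, dif_neg]
  rintro ⟨a', h1, -⟩
  simp at h1

lemma persKer_coe (V : PersMod k ℝ) {c d : ℝ} (h : c ≤ d) :
    persKer V c (d : EReal) = LinearMap.ker (V.map c d h) := by
  have hex : ∃ d' : ℝ, (d : EReal) = (d' : EReal) ∧ c ≤ d' := ⟨d, rfl, h⟩
  rw [persKer, dif_pos hex]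
  exact ker_map_congr V (EReal.coe_eq_coe_iff.mp hex.choose_spec.1.symm)
    hex.choose_spec.2 h

lemma persKer_top (V : PersMod k ℝ) (c : ℝ) : persKer V c ⊤ = ⊤ := by
  rw [persKer, dif_neg]
  rintro ⟨d', h1, -⟩
  simp at h1

lemma edim_eq_of_equiv {M N : Type} [AddCommGroup M] [Module k M]
    [AddCommGroup N] [Module k N] (e : M ≃ₗ[k] N) : edim k M = edim k N := by
  rw [edim, edim, e.rank_eq]

lemma map_comap_quot_equiv {M N : Type} [AddCommGroup M] [Module k M]
    [AddCommGroup N] [Module k N] (f : M ≃ₗ[k] N) (P Q : Submodule k M) :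
    edim k (↥P ⧸ Submodule.comap P.subtype Q)
      = edim k (↥(Submodule.map (f : M →ₗ[k] N) P) ⧸
          Submodule.comap (Submodule.map (f : M →ₗ[k] N) P).subtype
            (Submodule.map (f : M →ₗ[k] N) Q)) := by
  apply edim_eq_of_equiv
  refine Submodule.Quotient.equiv _ _ (f.submoduleMap P) ?_
  ext x
  constructor
  · rintro ⟨y, hy, rfl⟩
    exact ⟨y.1, hy, rfl⟩
  · rintro ⟨q, hq, hqx⟩
    obtain ⟨p, hp, hpx⟩ := x.2
    have hqp : q = p := f.injective (hqx.trans hpx.symm)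
    refine ⟨⟨q, hqp ▸ hp⟩, hq, ?_⟩
    apply Subtype.ext
    exact hqx

lemma persMeasure_iso (U V : PersMod k ℝ) (h : PersIso U V)
    (a : EReal) (b c : ℝ) (d : EReal)
    (hab : a < (b : EReal)) (hbc : b ≤ c) (hcd : (c : EReal) < d) :
    persMeasure U a b c d = persMeasure V a b c d := by
  obtain ⟨e, he⟩ := h
  have him : ∀ (x : EReal), x ≤ (c : EReal) →
      Submodule.map ((e c : U.space c →ₗ[k] V.space c)) (persIm U x c) = persIm V x c := by
    intro x hx
    induction x using EReal.rec with
    | bot => rw [persIm_bot, persIm_bot, Submodule.map_bot]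
    | top => exact absurd (lt_of_le_of_lt hx (EReal.coe_lt_top c)) (not_top_lt)
    | coe a' =>
      have ha'c : a' ≤ c := EReal.coe_le_coe_iff.mp hx
      rw [persIm_coe U ha'c, persIm_coe V ha'c, ← LinearMap.range_comp, he a' c ha'c,
        LinearMap.range_comp, LinearEquiv.range, Submodule.map_top]
  have hker : Submodule.map ((e c : U.space c →ₗ[k] V.space c)) (persKer U c d)
      = persKer V c d := by
    induction d using EReal.rec with
    | bot => exact absurd hcd (not_lt_bot)
    | top =>
      rw [persKer_top, persKer_top, Submodule.map_top, LinearEquiv.range]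
    | coe d' =>
      have hcd' : c ≤ d' := le_of_lt (EReal.coe_lt_coe_iff.mp hcd)
      rw [persKer_coe U hcd', persKer_coe V hcd']
      have h1 : LinearMap.ker (U.map c d' hcd')
          = Submodule.comap ((e c : U.space c →ₗ[k] V.space c))
              (LinearMap.ker (V.map c d' hcd')) := by
        rw [← LinearMap.ker_comp, ← he c d' hcd', LinearMap.ker_comp, LinearEquiv.ker,
          Submodule.comap_bot]
      rw [h1]
      exact Submodule.map_comap_eq_of_surjective (e c).surjective _
  have hinf : ∀ (P Q : Submodule k (U.space c)),
      Submodule.map ((e c : U.space c →ₗ[k] V.space c)) (P ⊓ Q)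
        = Submodule.map ((e c : U.space c →ₗ[k] V.space c)) P
          ⊓ Submodule.map ((e c : U.space c →ₗ[k] V.space c)) Q := by
    intro P Q
    exact Submodule.map_inf _ (e c).injective
  rw [persMeasure, persMeasure,
    map_comap_quot_equiv (e c) (persIm U (b:EReal) c ⊓ persKer U c d)
      (persIm U a c ⊓ persKer U c d),
    hinf, hinf, him (b : EReal) (EReal.coe_le_coe_iff.mpr hbc),
    him a (le_trans hab.le (EReal.coe_le_coe_iff.mpr hbc)), hker]

end Lemmas

section Main
variable {k : Type} [Field k] {L : Type}

noncomputable def dsumW (J : L → Set ℝ) (hJ : ∀ ℓ, IsIntervalSet (J ℓ)) : PersMod k ℝ :=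
  dsum fun ℓ => intervalModule k ℝ (J ℓ) (hJ ℓ)

variable (J : L → Set ℝ) (hJ : ∀ ℓ, IsIntervalSet (J ℓ))

lemma interval_comp_zero {c : ℝ} {ℓ : L} (hc : c ∉ J ℓ)
    (v : (intervalModule k ℝ (J ℓ) (hJ ℓ)).space c) : v = 0 := by
  funext ht
  exact absurd ht.down hc

lemma dsumW_map_eval {s t : ℝ} (h : s ≤ t)
    (x : Π₀ ℓ, (intervalModule k ℝ (J ℓ) (hJ ℓ)).space s) (ℓ : L) (ht : PLift (t ∈ J ℓ)) :
    (DFunLike.coe (F := Π₀ ℓ, (intervalModule k ℝ (J ℓ) (hJ ℓ)).space t)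
        ((dsumW J hJ).map s t h x)) ℓ ht
      = if hs : s ∈ J ℓ then x ℓ ⟨hs⟩ else 0 := rfl

lemma mem_range_dsumW {b c : ℝ} (h : b ≤ c)
    (x : Π₀ ℓ, (intervalModule k ℝ (J ℓ) (hJ ℓ)).space c) :
    x ∈ LinearMap.range ((dsumW J hJ).map b c h) ↔ ∀ ℓ, b ∉ J ℓ → x ℓ = 0 := by
  classical
  constructor
  · rintro ⟨y, rfl⟩ ℓ hb
    funext ht
    refine (dsumW_map_eval J hJ h y ℓ ht).trans ?_
    rw [dif_neg hb]
    rfl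
  · intro hx
    refine ⟨DFinsupp.mapRange
      (fun ℓ (v : (intervalModule k ℝ (J ℓ) (hJ ℓ)).space c) =>
        (fun _ : PLift (b ∈ J ℓ) => if hc : c ∈ J ℓ then v ⟨hc⟩ else 0 :
          (intervalModule k ℝ (J ℓ) (hJ ℓ)).space b))
      (fun ℓ => by
        funext ht
        show (if hc : c ∈ J ℓ then (0 : (intervalModule k ℝ (J ℓ) (hJ ℓ)).space c) ⟨hc⟩
          else 0) = 0
        by_cases hc : c ∈ J ℓ
        · rw [dif_pos hc]
          rfl
        · rw [dif_neg hc]) x, ?_⟩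
    apply DFinsupp.ext
    intro ℓ
    funext ht
    refine (dsumW_map_eval J hJ h _ ℓ ht).trans ?_
    by_cases hb : b ∈ J ℓ
    · rw [dif_pos hb]
      show (if hc : c ∈ J ℓ then x ℓ ⟨hc⟩ else 0) = x ℓ ht
      rw [dif_pos ht.down]
    · rw [dif_neg hb, hx ℓ hb]
      rfl

lemma mem_ker_dsumW {c d : ℝ} (h : c ≤ d)
    (x : Π₀ ℓ, (intervalModule k ℝ (J ℓ) (hJ ℓ)).space c) :
    x ∈ LinearMap.ker ((dsumW J hJ).map c d h) ↔ ∀ ℓ, d ∈ J ℓ → x ℓ = 0 := by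
  erw [LinearMap.mem_ker (M := (dsumW J hJ).space c)]
  constructor
  · intro h0 ℓ hd
    by_cases hc : c ∈ J ℓ
    · have h1 := congrArg
        (fun z : Π₀ ℓ, (intervalModule k ℝ (J ℓ) (hJ ℓ)).space d => z ℓ ⟨hd⟩) h0
      have h2 : (if hc' : c ∈ J ℓ then x ℓ ⟨hc'⟩ else 0) = 0 :=
        (dsumW_map_eval J hJ h x ℓ ⟨hd⟩).symm.trans h1
      rw [dif_pos hc] at h2
      funext ht
      exact h2
    · exact interval_comp_zero J hJ hc (x ℓ)
  · intro hx
    apply DFinsupp.ext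
    intro ℓ
    funext ht
    refine (dsumW_map_eval J hJ h x ℓ ht).trans ?_
    by_cases hc : c ∈ J ℓ
    · rw [dif_pos hc, hx ℓ ht.down]
      rfl
    · rw [dif_neg hc]
      rfl

lemma mem_persKer_dsumW {c : ℝ} {d : EReal} (hcd : (c : EReal) < d)
    (x : Π₀ ℓ, (intervalModule k ℝ (J ℓ) (hJ ℓ)).space c) :
    x ∈ persKer (dsumW J hJ) c d
      ↔ ∀ ℓ, (∃ d' : ℝ, d = (d' : EReal) ∧ d' ∈ J ℓ) → x ℓ = 0 := by
  induction d using EReal.rec with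
  | bot => exact absurd hcd (not_lt_bot)
  | top =>
    rw [persKer_top]
    refine iff_of_true (Submodule.mem_top (M := (dsumW J hJ).space c)) ?_
    rintro ℓ ⟨d', hd', -⟩
    simp at hd'
  | coe d' =>
    have hcd' : c ≤ d' := le_of_lt (EReal.coe_lt_coe_iff.mp hcd)
    rw [persKer_coe _ hcd', mem_ker_dsumW J hJ hcd' x]
    constructor
    · rintro hx ℓ ⟨d'', hd'', hmem⟩
      refine hx ℓ ?_
      rw [EReal.coe_eq_coe_iff.mp hd'']
      exact hmem
    · intro hx ℓ hmem
      exact hx ℓ ⟨d', rfl, hmem⟩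

lemma mem_persIm_dsumW {a : EReal} {c : ℝ} (hac : a ≤ (c : EReal))
    (x : Π₀ ℓ, (intervalModule k ℝ (J ℓ) (hJ ℓ)).space c) :
    x ∈ persIm (dsumW J hJ) a c
      ↔ ∀ ℓ, ¬ (∃ a' : ℝ, a = (a' : EReal) ∧ a' ∈ J ℓ) → x ℓ = 0 := by
  induction a using EReal.rec with
  | bot =>
    rw [persIm_bot]
    constructor
    · rintro hx ℓ -
      have hx0 : x = 0 := (Submodule.mem_bot k).mp hx
      rw [hx0]
      rfl
    · intro hx
      have hx0 : x = 0 := DFinsupp.ext fun ℓ => hx ℓ (by rintro ⟨a', ha', -⟩; simp at ha')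
      rw [hx0]
      exact Submodule.zero_mem ⊥
  | top => exact absurd (lt_of_le_of_lt hac (EReal.coe_lt_top c)) (lt_irrefl _)
  | coe a' =>
    have ha'c : a' ≤ c := EReal.coe_le_coe_iff.mp hac
    rw [persIm_coe _ ha'c, mem_range_dsumW J hJ ha'c x]
    constructor
    · intro hx ℓ hℓ
      exact hx ℓ fun hmem => hℓ ⟨a', rfl, hmem⟩
    · intro hx ℓ hb
      refine hx ℓ ?_
      rintro ⟨a'', ha'', hmem⟩
      rw [EReal.coe_eq_coe_iff.mp ha''] at hb
      exact hb hmem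

noncomputable def Gmap (c : ℝ) (cond : L → Prop) :
    (Π₀ _ : Subtype cond, k) →ₗ[k] Π₀ ℓ, (intervalModule k ℝ (J ℓ) (hJ ℓ)).space c :=
  DFinsupp.lsum ℕ fun s =>
    (DFinsupp.lsingle s.1).comp (LinearMap.pi fun _ : PLift (c ∈ J s.1) => LinearMap.id)

lemma Gmap_single (c : ℝ) (cond : L → Prop) (s : Subtype cond) (v : k) :
    Gmap J hJ c cond (DFinsupp.single s v) = DFinsupp.single s.1 (fun _ => v) := by
  unfold Gmap
  rw [DFinsupp.lsum_single]
  rfl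

lemma Gmap_apply_mem (c : ℝ) (cond : L → Prop) (s : Subtype cond)
    (g : Π₀ _ : Subtype cond, k) :
    Gmap J hJ c cond g s.1 = fun _ => g s := by
  have h : (DFinsupp.lapply (M := fun ℓ => (intervalModule k ℝ (J ℓ) (hJ ℓ)).space c)
        s.1).comp (Gmap J hJ c cond)
      = LinearMap.pi (fun _ : PLift (c ∈ J s.1) =>
          DFinsupp.lapply (M := fun _ : Subtype cond => k) s) := by
    apply DFinsupp.lhom_ext
    intro s' v
    funext ht
    simp only [LinearMap.comp_apply, DFinsupp.lapply_apply, Gmap_single J hJ,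
      LinearMap.pi_apply]
    by_cases h' : s' = s
    · subst h'
      erw [DFinsupp.single_eq_same]
      exact (DFinsupp.single_eq_same (β := fun _ : Subtype cond => k) (i := s') (b := v)).symm
    · erw [DFinsupp.single_eq_of_ne (fun hh : s.1 = s'.1 => h' (Subtype.ext hh.symm))]
      exact (DFinsupp.single_eq_of_ne (β := fun _ : Subtype cond => k) (b := v) (Ne.symm h')).symm
  exact LinearMap.congr_fun h g

lemma Gmap_apply_not_mem (c : ℝ) (cond : L → Prop) {ℓ : L} (hℓ : ¬ cond ℓ)
    (g : Π₀ _ : Subtype cond, k) :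
    Gmap J hJ c cond g ℓ = 0 := by
  have h : (DFinsupp.lapply (M := fun ℓ => (intervalModule k ℝ (J ℓ) (hJ ℓ)).space c)
      ℓ).comp (Gmap J hJ c cond) = 0 := by
    apply DFinsupp.lhom_ext
    intro s' v
    simp only [LinearMap.comp_apply, DFinsupp.lapply_apply, Gmap_single J hJ,
      LinearMap.zero_apply]
    exact DFinsupp.single_eq_of_ne (fun hh : ℓ = s'.1 => hℓ (hh ▸ s'.2))
  exact LinearMap.congr_fun h g

set_option synthInstance.maxHeartbeats 1000000 in
set_option maxHeartbeats 2000000 in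
lemma persMeasure_dsumW (a : EReal) (b c : ℝ) (d : EReal)
    (hab : a < (b : EReal)) (hbc : b ≤ c) (hcd : (c : EReal) < d) :
    persMeasure (dsumW (k := k) J hJ) a b c d
      = ecard {ℓ : L // c ∈ J ℓ ∧ b ∈ J ℓ ∧ ¬ (∃ d' : ℝ, d = (d' : EReal) ∧ d' ∈ J ℓ)
          ∧ ¬ (∃ a' : ℝ, a = (a' : EReal) ∧ a' ∈ J ℓ)} := by
  classical
  unfold persMeasure
  set cond : L → Prop := fun ℓ => c ∈ J ℓ ∧ b ∈ J ℓ
      ∧ ¬ (∃ d' : ℝ, d = (d' : EReal) ∧ d' ∈ J ℓ)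
      ∧ ¬ (∃ a' : ℝ, a = (a' : EReal) ∧ a' ∈ J ℓ) with hcond
  set P : Submodule k ((dsumW J hJ).space c) :=
    persIm (dsumW J hJ) (b : EReal) c ⊓ persKer (dsumW J hJ) c d with hPdef
  set Q : Submodule k ((dsumW J hJ).space c) :=
    persIm (dsumW J hJ) a c ⊓ persKer (dsumW J hJ) c d with hQdef
  have hPmem : ∀ x : Π₀ ℓ, (intervalModule k ℝ (J ℓ) (hJ ℓ)).space c,
      x ∈ P ↔ ∀ ℓ, (b ∉ J ℓ ∨ (∃ d' : ℝ, d = (d' : EReal) ∧ d' ∈ J ℓ)) → x ℓ = 0 := by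
    intro x
    erw [hPdef, Submodule.mem_inf (M := (dsumW J hJ).space c), mem_persIm_dsumW J hJ (EReal.coe_le_coe_iff.mpr hbc) x,
      mem_persKer_dsumW J hJ hcd x]
    constructor
    · rintro ⟨h1, h2⟩ ℓ (hb | hk)
      · refine h1 ℓ ?_
        rintro ⟨a'', ha'', hm⟩
        rw [EReal.coe_eq_coe_iff.mp ha''] at hb
        exact hb hm
      · exact h2 ℓ hk
    · intro hx
      constructor
      · intro ℓ hn
        exact hx ℓ (Or.inl fun hb => hn ⟨b, rfl, hb⟩)
      · intro ℓ hk
        exact hx ℓ (Or.inr hk)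
  have hQmem : ∀ x : Π₀ ℓ, (intervalModule k ℝ (J ℓ) (hJ ℓ)).space c,
      x ∈ Q ↔ ∀ ℓ, (¬ (∃ a' : ℝ, a = (a' : EReal) ∧ a' ∈ J ℓ)
        ∨ (∃ d' : ℝ, d = (d' : EReal) ∧ d' ∈ J ℓ)) → x ℓ = 0 := by
    intro x
    erw [hQdef, Submodule.mem_inf (M := (dsumW J hJ).space c),
      mem_persIm_dsumW J hJ (le_trans hab.le (EReal.coe_le_coe_iff.mpr hbc)) x,
      mem_persKer_dsumW J hJ hcd x]
    constructor
    · rintro ⟨h1, h2⟩ ℓ (hn | hk)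
      · exact h1 ℓ hn
      · exact h2 ℓ hk
    · intro hx
      exact ⟨fun ℓ hn => hx ℓ (Or.inl hn), fun ℓ hk => hx ℓ (Or.inr hk)⟩
  have hrange : ∀ g, Gmap J hJ c cond g ∈ P := by
    intro g
    refine (hPmem _).mpr ?_
    intro ℓ hℓ
    by_cases hc' : cond ℓ
    · rcases hℓ with hb | hk
      · exact absurd hc'.2.1 hb
      · exact absurd hk hc'.2.2.1
    · exact Gmap_apply_not_mem J hJ c cond hc' g
  let F : (Π₀ _ : Subtype cond, k) →ₗ[k] (↥P ⧸ Submodule.comap P.subtype Q) :=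
    (Submodule.comap P.subtype Q).mkQ.comp (LinearMap.codRestrict P (Gmap J hJ c cond) hrange)
  have hinj : Function.Injective F := by
    intro g₁ g₂ hg
    have h0 : F (g₁ - g₂) = 0 := (map_sub F g₁ g₂).trans (by rw [hg, sub_self])
    have hmem0 : (LinearMap.codRestrict P (Gmap J hJ c cond) hrange) (g₁ - g₂)
        ∈ Submodule.comap P.subtype Q := (Submodule.Quotient.mk_eq_zero _).mp h0
    have hmem : Gmap J hJ c cond (g₁ - g₂) ∈ Q := hmem0
    have hz : ∀ s : Subtype cond, (g₁ - g₂) s = 0 := by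
      intro s
      have h2 := (hQmem _).mp hmem s.1 (Or.inl s.2.2.2.2)
      have h3 := (Gmap_apply_mem J hJ c cond s (g₁ - g₂)).symm.trans h2
      exact congrFun h3 ⟨s.2.1⟩
    have h4 : g₁ - g₂ = 0 := DFinsupp.ext hz
    exact sub_eq_zero.mp h4
  have hsurj : Function.Surjective F := by
    intro z
    obtain ⟨xb, rfl⟩ := Submodule.mkQ_surjective _ z
    let x0 : Π₀ ℓ, (intervalModule k ℝ (J ℓ) (hJ ℓ)).space c := xb.1
    set g : Π₀ _ : Subtype cond, k := DFinsupp.subtypeDomain cond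
      (DFinsupp.mapRange (fun ℓ (v : (intervalModule k ℝ (J ℓ) (hJ ℓ)).space c) =>
        if hc' : c ∈ J ℓ then v ⟨hc'⟩ else (0 : k))
        (fun ℓ => by
          show (if hc' : c ∈ J ℓ then (0 : (intervalModule k ℝ (J ℓ) (hJ ℓ)).space c) ⟨hc'⟩
            else (0 : k)) = 0
          by_cases hc' : c ∈ J ℓ
          · rw [dif_pos hc']
            rfl
          · rw [dif_neg hc']) x0) with hg
    refine ⟨g, ?_⟩
    have hgoal : Gmap J hJ c cond g - x0 ∈ Q := by
      refine (hQmem _).mpr ?_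
      intro ℓ hℓ
      have hsub : (Gmap J hJ c cond g - x0) ℓ = Gmap J hJ c cond g ℓ - x0 ℓ :=
        DFinsupp.sub_apply _ _ _
      rw [hsub, sub_eq_zero]
      by_cases hc' : cond ℓ
      · have hA := Gmap_apply_mem J hJ c cond ⟨ℓ, hc'⟩ g
        have hgs : g ⟨ℓ, hc'⟩ = x0 ℓ ⟨hc'.1⟩ := by
          rw [hg, DFinsupp.subtypeDomain_apply, DFinsupp.mapRange_apply, dif_pos hc'.1]
        refine hA.trans ?_
        funext ht
        show g ⟨ℓ, hc'⟩ = x0 ℓ ht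
        rw [hgs]
      · have hB := Gmap_apply_not_mem J hJ c cond hc' g
        have hx0 : x0 ℓ = 0 := by
          rcases hℓ with hni | hk
          · by_cases hkd' : ∃ d' : ℝ, d = (d' : EReal) ∧ d' ∈ J ℓ
            · exact (hPmem x0).mp xb.2 ℓ (Or.inr hkd')
            · by_cases hcc : c ∈ J ℓ
              · have hb : b ∉ J ℓ := fun hb => hc' ⟨hcc, hb, hkd', hni⟩
                exact (hPmem x0).mp xb.2 ℓ (Or.inl hb)
              · exact interval_comp_zero J hJ hcc (x0 ℓ)
          · exact (hPmem x0).mp xb.2 ℓ (Or.inr hk)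
        rw [hB, hx0]
    show (Submodule.comap P.subtype Q).mkQ
        ((LinearMap.codRestrict P (Gmap J hJ c cond) hrange) g)
      = (Submodule.comap P.subtype Q).mkQ xb
    rw [Submodule.mkQ_apply, Submodule.mkQ_apply, Submodule.Quotient.eq,
      Submodule.mem_comap]
    exact hgoal
  have equiv1 := LinearEquiv.ofBijective F ⟨hinj, hsurj⟩
  rw [edim, ← equiv1.rank_eq,
    ← (finsuppLequivDFinsupp (ι := Subtype cond) (M := k) k).rank_eq,
    rank_finsupp_self, Cardinal.lift_id]
  rfl

lemma ereal_cases_a {a : EReal} {b : ℝ} (hab : a < (b : EReal)) :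
    a = ⊥ ∨ ∃ a' : ℝ, a = (a' : EReal) := by
  induction a using EReal.rec with
  | bot => exact Or.inl rfl
  | top => exact absurd hab not_top_lt
  | coe a' => exact Or.inr ⟨a', rfl⟩

lemma ereal_cases_d {d : EReal} {c : ℝ} (hcd : (c : EReal) < d) :
    d = ⊤ ∨ ∃ d' : ℝ, d = (d' : EReal) := by
  induction d using EReal.rec with
  | bot => exact absurd hcd not_lt_bot
  | top => exact Or.inl rfl
  | coe d' => exact Or.inr ⟨d', rfl⟩

end Main

lemma cond_iff {L : Type} (J : L → Set ℝ) (hJ : ∀ ℓ, IsIntervalSet (J ℓ)) (a : EReal) (b c : ℝ) (d : EReal)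
    (hab : a < (b : EReal)) (hbc : b ≤ c) (hcd : (c : EReal) < d) (ℓ : L) :
    (c ∈ J ℓ ∧ b ∈ J ℓ ∧ ¬ (∃ d' : ℝ, d = (d' : EReal) ∧ d' ∈ J ℓ)
        ∧ ¬ (∃ a' : ℝ, a = (a' : EReal) ∧ a' ∈ J ℓ))
    ↔ (Set.Icc b c ⊆ J ℓ ∧ ∀ x ∈ J ℓ, a < (x : EReal) ∧ (x : EReal) < d) := by
  constructor
  · rintro ⟨hc', hb', hnkd, hnia⟩
    refine ⟨fun t htt => (hJ ℓ).2 hb' hc' htt.1 htt.2, fun x hx => ⟨?_, ?_⟩⟩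
    · rcases ereal_cases_a hab with rfl | ⟨a', rfl⟩
      · exact EReal.bot_lt_coe x
      · rw [EReal.coe_lt_coe_iff]
        by_contra hle
        push_neg at hle
        exact hnia ⟨a', rfl, (hJ ℓ).2 hx hb' hle (le_of_lt (EReal.coe_lt_coe_iff.mp hab))⟩
    · rcases ereal_cases_d hcd with rfl | ⟨d', rfl⟩
      · exact EReal.coe_lt_top x
      · rw [EReal.coe_lt_coe_iff]
        by_contra hle
        push_neg at hle
        exact hnkd ⟨d', rfl, (hJ ℓ).2 hc' hx (le_of_lt (EReal.coe_lt_coe_iff.mp hcd)) hle⟩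
  · rintro ⟨hicc, hbd⟩
    have hc' : c ∈ J ℓ := hicc ⟨hbc, le_refl c⟩
    have hb' : b ∈ J ℓ := hicc ⟨le_refl b, hbc⟩
    refine ⟨hc', hb', ?_, ?_⟩
    · rintro ⟨d', rfl, hd'⟩
      exact absurd (hbd d' hd').2 (lt_irrefl _)
    · rintro ⟨a', rfl, ha'⟩
      exact absurd (hbd a' ha').1 (lt_irrefl _)



theorem stmt7 {k : Type} [Field k] {L : Type} (J : L → Set ℝ)
    (hJ : ∀ ℓ, IsIntervalSet (J ℓ)) (V : PersMod k ℝ)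
    (hV : PersIso V (dsum fun ℓ => intervalModule k ℝ (J ℓ) (hJ ℓ)))
    (a : EReal) (b c : ℝ) (d : EReal)
    (hab : a < (b : EReal)) (hbc : b ≤ c) (hcd : (c : EReal) < d) :
    persMeasure V a b c d =
      ecard {ℓ : L // Set.Icc b c ⊆ J ℓ ∧ ∀ x ∈ J ℓ, a < (x : EReal) ∧ (x : EReal) < d} := by
  classical
  have h1 : persMeasure V a b c d
      = persMeasure (dsum fun ℓ => intervalModule k ℝ (J ℓ) (hJ ℓ)) a b c d :=
    persMeasure_iso _ _ hV a b c d hab hbc hcd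
  rw [h1]
  refine Eq.trans (persMeasure_dsumW J hJ a b c d hab hbc hcd) ?_
  exact congrArg Cardinal.toENat
    (Cardinal.mk_congr (Equiv.subtypeEquivRight (cond_iff J hJ a b c d hab hbc hcd)))
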